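/- Let a < b and c < d be real numbers and let R = [a,b] × [c,d] be the solid closed rectangle in ℝ². Let F = (M, N) be a vector field defined and differentiable on (an open neighborhood of) R. Then there exist points x, y ∈ R such that (1/area(R)) times the counterclockwise circulation of F around ∂R equals ∂N/∂x(y) − ∂M/∂y(x), where area(R) = (b−a)(d−c). -/

import Mathlib

open MeasureTheory


lemma contAt_fst' {N : ℝ × ℝ → ℝ} {x t : ℝ} (h : ContinuousAt N (x, t)) :
    ContinuousAt (fun s => N (s, t)) x :=
  ContinuousAt.comp (f := fun s : ℝ => (s, t)) h (by fun_prop)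

lemma contAt_snd' {N : ℝ × ℝ → ℝ} {x t : ℝ} (h : ContinuousAt N (x, t)) :
    ContinuousAt (fun s => N (x, s)) t :=
  ContinuousAt.comp (f := fun s : ℝ => (x, s)) h (by fun_prop)

/-- First mean value theorem for integrals (via FTC + Lagrange MVT). -/
lemma integral_mvt_aux {f : ℝ → ℝ} {c d : ℝ} (hcd : c < d)
    (hf : ∀ t ∈ Set.Icc c d, ContinuousAt f t) :
    ∃ t0 ∈ Set.Icc c d, ∫ t in c..d, f t = f t0 * (d - c) := by
  have hfc : ContinuousOn f (Set.Icc c d) := fun t ht => (hf t ht).continuousWithinAt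
  have hint : IntervalIntegrable f volume c d := by
    rw [intervalIntegrable_iff_integrableOn_Icc_of_le hcd.le]
    exact hfc.integrableOn_compact isCompact_Icc
  have hGcont : ContinuousOn (fun u => ∫ t in c..u, f t) (Set.Icc c d) := by
    have := intervalIntegral.continuousOn_primitive_interval' (μ := volume) hint
      (by rw [Set.uIcc_of_le hcd.le]; exact Set.left_mem_Icc.2 hcd.le)
    rwa [Set.uIcc_of_le hcd.le] at this
  have hderiv : ∀ t ∈ Set.Ioo c d, HasDerivAt (fun u => ∫ t in c..u, f t) (f t) t := by
    intro t ht
    refine intervalIntegral.integral_hasDerivAt_right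
      (hint.mono_set ?_) ?_ (hf t (Set.Ioo_subset_Icc_self ht))
    · rw [Set.uIcc_of_le ht.1.le, Set.uIcc_of_le hcd.le]
      exact Set.Icc_subset_Icc le_rfl ht.2.le
    · exact ⟨Set.Ioo c d, Ioo_mem_nhds ht.1 ht.2,
        (hfc.mono Set.Ioo_subset_Icc_self).aestronglyMeasurable measurableSet_Ioo⟩
  obtain ⟨t0, ht0, h⟩ := exists_hasDerivAt_eq_slope (fun u => ∫ t in c..u, f t) f hcd
    hGcont hderiv
  refine ⟨t0, Set.Ioo_subset_Icc_self ht0, ?_⟩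
  simp only [intervalIntegral.integral_same, sub_zero] at h
  rw [h, div_mul_cancel₀ _ (sub_ne_zero.2 hcd.ne')]

/-- Lagrange MVT in the first coordinate for a function on the plane. -/
lemma mvt_fst {N : ℝ × ℝ → ℝ} {a b t0 : ℝ} (hab : a < b)
    (h : ∀ x ∈ Set.Icc a b, DifferentiableAt ℝ N (x, t0)) :
    ∃ ξ ∈ Set.Icc a b, fderiv ℝ N (ξ, t0) (1, 0) = (N (b, t0) - N (a, t0)) / (b - a) := by
  have hd : ∀ x ∈ Set.Ioo a b,
      HasDerivAt (fun x => N (x, t0)) (fderiv ℝ N (x, t0) (1, 0)) x := by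
    intro x hx
    have h1 : HasDerivAt (fun x : ℝ => (x, t0)) ((1 : ℝ), (0 : ℝ)) x :=
      HasDerivAt.prodMk (hasDerivAt_id x) (hasDerivAt_const x t0)
    exact ((h x (Set.Ioo_subset_Icc_self hx)).hasFDerivAt).comp_hasDerivAt x h1
  have hc : ContinuousOn (fun x => N (x, t0)) (Set.Icc a b) := fun x hx =>
    (contAt_fst' (h x hx).continuousAt).continuousWithinAt
  obtain ⟨ξ, hξ, hval⟩ := exists_hasDerivAt_eq_slope (fun x => N (x, t0))
    (fun x => fderiv ℝ N (x, t0) (1, 0)) hab hc hd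
  exact ⟨ξ, Set.Ioo_subset_Icc_self hξ, hval⟩

/-- Lagrange MVT in the second coordinate for a function on the plane. -/
lemma mvt_snd {M : ℝ × ℝ → ℝ} {c d s0 : ℝ} (hcd : c < d)
    (h : ∀ y ∈ Set.Icc c d, DifferentiableAt ℝ M (s0, y)) :
    ∃ η ∈ Set.Icc c d, fderiv ℝ M (s0, η) (0, 1) = (M (s0, d) - M (s0, c)) / (d - c) := by
  have hd : ∀ y ∈ Set.Ioo c d,
      HasDerivAt (fun y => M (s0, y)) (fderiv ℝ M (s0, y) (0, 1)) y := by
    intro y hy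
    have h1 : HasDerivAt (fun y : ℝ => (s0, y)) ((0 : ℝ), (1 : ℝ)) y :=
      HasDerivAt.prodMk (hasDerivAt_const y s0) (hasDerivAt_id y)
    exact ((h y (Set.Ioo_subset_Icc_self hy)).hasFDerivAt).comp_hasDerivAt y h1
  have hc : ContinuousOn (fun y => M (s0, y)) (Set.Icc c d) := fun y hy =>
    (contAt_snd' (h y hy).continuousAt).continuousWithinAt
  obtain ⟨η, hη, hval⟩ := exists_hasDerivAt_eq_slope (fun y => M (s0, y))
    (fun y => fderiv ℝ M (s0, y) (0, 1)) hcd hc hd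
  exact ⟨η, Set.Ioo_subset_Icc_self hη, hval⟩

/-- **Mean Value Theorem for vector fields on rectangles.**
If `F = (M, N)` is a vector field differentiable on (a neighborhood of) the
rectangle `R = [a,b] × [c,d]` (with `a < b`, `c < d`), then there are points
`x, y ∈ R` such that `(1/area R)` times the counterclockwise circulation of `F`
around `∂R` equals `∂N/∂x (y) − ∂M/∂y (x)`. -/
theorem mvt_for_vector_fields_on_rectangles
    (a b c d : ℝ) (hab : a < b) (hcd : c < d)
    (M N : ℝ × ℝ → ℝ)
    (hM : ∀ p ∈ Set.Icc a b ×ˢ Set.Icc c d, DifferentiableAt ℝ M p)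
    (hN : ∀ p ∈ Set.Icc a b ×ˢ Set.Icc c d, DifferentiableAt ℝ N p) :
    ∃ x ∈ Set.Icc a b ×ˢ Set.Icc c d, ∃ y ∈ Set.Icc a b ×ˢ Set.Icc c d,
      (1 / ((b - a) * (d - c))) *
          ((∫ t in a..b, M (t, c)) + (∫ t in c..d, N (b, t))
            - (∫ t in a..b, M (t, d)) - (∫ t in c..d, N (a, t)))
        = fderiv ℝ N y (1, 0) - fderiv ℝ M x (0, 1) := by
  have hba : (b - a) ≠ 0 := sub_ne_zero.2 hab.ne'
  have hdc : (d - c) ≠ 0 := sub_ne_zero.2 hcd.ne'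
  -- membership helpers
  have hmemN : ∀ x ∈ Set.Icc a b, ∀ t ∈ Set.Icc c d,
      ((x, t) : ℝ × ℝ) ∈ Set.Icc a b ×ˢ Set.Icc c d := fun x hx t ht => ⟨hx, ht⟩
  -- g t = N (b,t) - N (a,t) continuous at each point of [c,d]
  have hgc : ∀ t ∈ Set.Icc c d, ContinuousAt (fun t => N (b, t) - N (a, t)) t := by
    intro t ht
    have h1 : ContinuousAt (fun t => N (b, t)) t :=
      contAt_snd' ((hN (b, t) ⟨Set.right_mem_Icc.2 hab.le, ht⟩).continuousAt)
    have h2 : ContinuousAt (fun t => N (a, t)) t :=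
      contAt_snd' ((hN (a, t) ⟨Set.left_mem_Icc.2 hab.le, ht⟩).continuousAt)
    exact h1.sub h2
  have hhc : ∀ s ∈ Set.Icc a b, ContinuousAt (fun s => M (s, d) - M (s, c)) s := by
    intro s hs
    have h1 : ContinuousAt (fun s => M (s, d)) s :=
      contAt_fst' ((hM (s, d) ⟨hs, Set.right_mem_Icc.2 hcd.le⟩).continuousAt)
    have h2 : ContinuousAt (fun s => M (s, c)) s :=
      contAt_fst' ((hM (s, c) ⟨hs, Set.left_mem_Icc.2 hcd.le⟩).continuousAt)
    exact h1.sub h2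
  obtain ⟨t0, ht0, hIg⟩ := integral_mvt_aux hcd hgc
  obtain ⟨s0, hs0, hIh⟩ := integral_mvt_aux hab hhc
  obtain ⟨ξ, hξ, hξval⟩ := mvt_fst (N := N) hab (fun x hx => hN (x, t0) ⟨hx, ht0⟩)
  obtain ⟨η, hη, hηval⟩ := mvt_snd (M := M) hcd (fun y hy => hM (s0, y) ⟨hs0, hy⟩)
  refine ⟨(s0, η), ⟨hs0, hη⟩, (ξ, t0), ⟨hξ, ht0⟩, ?_⟩
  -- rewrite the integrals
  have hintN : ∀ x ∈ Set.Icc a b, IntervalIntegrable (fun t => N (x, t)) volume c d := by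
    intro x hx
    rw [intervalIntegrable_iff_integrableOn_Icc_of_le hcd.le]
    refine (ContinuousOn.integrableOn_compact isCompact_Icc ?_)
    intro t ht
    exact (contAt_snd' ((hN (x, t) ⟨hx, ht⟩).continuousAt)).continuousWithinAt
  have hintM : ∀ y ∈ Set.Icc c d, IntervalIntegrable (fun s => M (s, y)) volume a b := by
    intro y hy
    rw [intervalIntegrable_iff_integrableOn_Icc_of_le hab.le]
    refine (ContinuousOn.integrableOn_compact isCompact_Icc ?_)
    intro s hs
    exact (contAt_fst' ((hM (s, y) ⟨hs, hy⟩).continuousAt)).continuousWithinAt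
  have hsplitN : (∫ t in c..d, N (b, t)) - (∫ t in c..d, N (a, t))
      = ∫ t in c..d, (N (b, t) - N (a, t)) :=
    (intervalIntegral.integral_sub (hintN b (Set.right_mem_Icc.2 hab.le))
      (hintN a (Set.left_mem_Icc.2 hab.le))).symm
  have hsplitM : (∫ s in a..b, M (s, d)) - (∫ s in a..b, M (s, c))
      = ∫ s in a..b, (M (s, d) - M (s, c)) :=
    (intervalIntegral.integral_sub (hintM d (Set.right_mem_Icc.2 hcd.le))
      (hintM c (Set.left_mem_Icc.2 hcd.le))).symm
  have key : (∫ t in a..b, M (t, c)) + (∫ t in c..d, N (b, t))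
      - (∫ t in a..b, M (t, d)) - (∫ t in c..d, N (a, t))
      = (N (b, t0) - N (a, t0)) * (d - c) - (M (s0, d) - M (s0, c)) * (b - a) := by
    have : (∫ t in a..b, M (t, c)) + (∫ t in c..d, N (b, t))
      - (∫ t in a..b, M (t, d)) - (∫ t in c..d, N (a, t))
      = ((∫ t in c..d, N (b, t)) - (∫ t in c..d, N (a, t)))
        - ((∫ s in a..b, M (s, d)) - (∫ s in a..b, M (s, c))) := by ring
    rw [this, hsplitN, hsplitM, hIg, hIh]
  rw [key, hξval, hηval]
  field_simp
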